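/- Fix m, l ∈ ℕ and grid points x_{i+k} for k = −m,…,l with Σ_{k=−m}^{l} cos²(x_{i+k}) > 0. Let D be the N×(m+l+1) matrix with entries D_{kj} = e^{−c t_k} cos(x_{i+j}) and d the vector with entries d_k = cos(x_i) e^{−cΔt} e^{−c t_k}, where the t_k ∈ ℝ are not all giving zero vector (c ∈ ℝ, at least one t_k). Then the minimum-norm least squares solution is β_j = e^{−cΔt} cos(x_{i+j}) cos(x_i) / (Σ_{k=−m}^{l} cos²(x_{i+k})). -/

import Mathlib

/-- Minimum-norm least-squares solution for the 1D linear diffusion data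
`u(x,t) = cos(x) e^{-ct}`. The stencil points are `xs j`, `j : Fin (m+l+1)`,
with center value `xi`; `D k j = e^{-c t_k} cos(xs j)` and
`d k = cos(xi) e^{-cΔt} e^{-c t_k}`. -/
theorem min_norm_ls_solution_linear_diffusion
    (m l N : ℕ) (hN : 0 < N)
    (c Δt xi : ℝ) (xs : Fin (m + l + 1) → ℝ) (t : Fin N → ℝ)
    (hpos : 0 < ∑ k, Real.cos (xs k) ^ 2)
    (D : Matrix (Fin N) (Fin (m + l + 1)) ℝ)
    (hD : ∀ k j, D k j = Real.exp (-c * t k) * Real.cos (xs j))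
    (d : Fin N → ℝ)
    (hd : ∀ k, d k = Real.cos xi * Real.exp (-c * Δt) * Real.exp (-c * t k))
    (β : Fin (m + l + 1) → ℝ)
    (hβ : ∀ j, β j = Real.exp (-c * Δt) * Real.cos (xs j) * Real.cos xi /
        ∑ k, Real.cos (xs k) ^ 2) :
    (∀ β' : Fin (m + l + 1) → ℝ,
      ∑ i, (D.mulVec β i - d i) ^ 2 ≤ ∑ i, (D.mulVec β' i - d i) ^ 2) ∧
    (∀ β' : Fin (m + l + 1) → ℝ,
      (∑ i, (D.mulVec β' i - d i) ^ 2 = ∑ i, (D.mulVec β i - d i) ^ 2) →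
      ∑ j, (β j) ^ 2 ≤ ∑ j, (β' j) ^ 2) := by
  set Q : ℝ := ∑ k, Real.cos (xs k) ^ 2 with hQ
  set S : ℝ := Real.exp (-c * Δt) * Real.cos xi with hS
  -- residual formula
  have hres : ∀ (v : Fin (m + l + 1) → ℝ) (i : Fin N),
      D.mulVec v i - d i =
        Real.exp (-c * t i) * ((∑ j, Real.cos (xs j) * v j) - S) := by
    intro v i
    simp only [Matrix.mulVec, dotProduct, hD, hd i, hS]
    rw [mul_sub, Finset.mul_sum]
    congr 1
    · exact Finset.sum_congr rfl fun j _ => by ring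
    · ring
  have hsumβ : (∑ j, Real.cos (xs j) * β j) = S := by
    have : (∑ j, Real.cos (xs j) * β j) = (S / Q) * Q := by
      rw [Finset.mul_sum]
      refine Finset.sum_congr rfl fun j _ => ?_
      rw [hβ j]; field_simp [hS]; simp only [hS, neg_mul]; ring
    rw [this]; field_simp
  have hβzero : ∀ i : Fin N, D.mulVec β i - d i = 0 := by
    intro i; rw [hres β i, hsumβ]; simp
  constructor
  · intro β'
    have h1 : ∑ i, (D.mulVec β i - d i) ^ 2 = 0 := by
      simp [hβzero]
    rw [h1]
    exact Finset.sum_nonneg fun i _ => sq_nonneg _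
  · intro β' heq
    have h0 : ∑ i, (D.mulVec β' i - d i) ^ 2 = 0 := by
      rw [heq]; simp [hβzero]
    have hall : ∀ i ∈ Finset.univ, (D.mulVec β' i - d i) ^ 2 = 0 :=
      (Finset.sum_eq_zero_iff_of_nonneg (fun i _ => sq_nonneg _)).mp h0
    obtain ⟨i0⟩ := Fin.pos_iff_nonempty.mp hN
    have hi0 := hall i0 (Finset.mem_univ i0)
    rw [hres β' i0] at hi0
    have hexp := Real.exp_pos (-c * t i0)
    have hS' : (∑ j, Real.cos (xs j) * β' j) = S := by
      have := pow_eq_zero_iff (n := 2) (by norm_num) |>.mp hi0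
      rcases mul_eq_zero.mp this with h | h
      · exact absurd h hexp.ne'
      · linarith
    -- Cauchy-Schwarz
    have hcs := Finset.sum_mul_sq_le_sq_mul_sq Finset.univ
      (fun j => Real.cos (xs j)) β'
    rw [hS'] at hcs
    have hβsq : ∑ j, (β j) ^ 2 = S ^ 2 / Q := by
      have : ∑ j, (β j) ^ 2 = (S / Q) ^ 2 * Q := by
        rw [Finset.mul_sum]
        refine Finset.sum_congr rfl fun j _ => ?_
        rw [hβ j]; field_simp [hS]; simp only [hS, neg_mul]; ring
      rw [this]; field_simp
    rw [hβsq]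
    rw [div_le_iff₀ hpos]
    calc S ^ 2 ≤ Q * ∑ j, β' j ^ 2 := hcs
      _ = (∑ j, β' j ^ 2) * Q := mul_comm _ _
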